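/- If either π^m(a;x) = π(a;x) almost everywhere or Q^m(x,a) = Q(x,a) almost everywhere, then the population augmented inverse-probability-weighted value V^{AIPWE,m}(d) = E[ Y·1{A=d(X)}/π^m(A;X) − (1{A=d(X)} − π^m(d(X);X))/π^m(d(X);X) · Q^m(X, d(X)) ] equals the true value V(d) = E[Q(X, d(X))]. -/

import Mathlib

open MeasureTheory


lemma abs_mul_le' {x y a b : ℝ} (hx : |x| ≤ a) (hy : |y| ≤ b) : |x * y| ≤ a * b := by
  rw [abs_mul]
  exact mul_le_mul hx hy (abs_nonneg _) ((abs_nonneg _).trans hx)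

lemma integrable_of_bdd {Ω : Type*} [MeasurableSpace Ω] {μ : Measure Ω} [IsFiniteMeasure μ]
    {f : Ω → ℝ} (hm : Measurable f) {B : ℝ} (hb : ∀ ω, |f ω| ≤ B) :
    Integrable f μ :=
  (integrable_const B).mono' hm.aestronglyMeasurable
    (Filter.Eventually.of_forall (fun ω => by simpa using hb ω))

lemma extend_test {Ω β : Type*} [MeasurableSpace Ω] [MeasurableSpace β]
    {μ : Measure Ω} (E F : Ω → ℝ) (X : Ω → β)
    (H : ∀ h : β → ℝ, Measurable h → (∀ x, |h x| ≤ 1) →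
      ∫ ω, E ω * h (X ω) ∂μ = ∫ ω, F ω * h (X ω) ∂μ)
    (h : β → ℝ) (hm : Measurable h) {B : ℝ} (hB : 0 < B) (hb : ∀ x, |h x| ≤ B) :
    ∫ ω, E ω * h (X ω) ∂μ = ∫ ω, F ω * h (X ω) ∂μ := by
  have H2 := H (fun x => B⁻¹ * h x) (measurable_const.mul hm) (fun x => by
    rw [abs_mul, abs_inv, abs_of_pos hB]
    calc B⁻¹ * |h x| ≤ B⁻¹ * B :=
          mul_le_mul_of_nonneg_left (hb x) (inv_nonneg.mpr hB.le)
      _ = 1 := inv_mul_cancel₀ hB.ne')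
  have e1 : ∫ ω, E ω * (B⁻¹ * h (X ω)) ∂μ = B⁻¹ * ∫ ω, E ω * h (X ω) ∂μ := by
    rw [← integral_const_mul]; congr 1; funext ω; ring
  have e2 : ∫ ω, F ω * (B⁻¹ * h (X ω)) ∂μ = B⁻¹ * ∫ ω, F ω * h (X ω) ∂μ := by
    rw [← integral_const_mul]; congr 1; funext ω; ring
  rw [e1, e2] at H2
  exact mul_left_cancel₀ (inv_ne_zero hB.ne') H2

lemma arm_value {Ω β : Type*} [MeasurableSpace Ω] [MeasurableSpace β]
    (μ : Measure Ω) [IsProbabilityMeasure μ]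
    (X : Ω → β) (hX : Measurable X)
    (I : Ω → ℝ) (hImeas : Measurable I) (hIbd : ∀ ω, 0 ≤ I ω ∧ I ω ≤ 1)
    (Y : Ω → ℝ) (hYmeas : Measurable Y) {C : ℝ} (hC : 0 ≤ C) (hYbd : ∀ ω, |Y ω| ≤ C)
    (pa pma qa qma D : β → ℝ)
    (hpa : Measurable pa) (hpma : Measurable pma) (hqa : Measurable qa)
    (hqma : Measurable qma) (hD : Measurable D) (hDbd : ∀ x, |D x| ≤ 1)
    {τ : ℝ} (hτ : 0 < τ)
    (hpab : ∀ x, 0 < pa x ∧ pa x ≤ 1)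
    (hpmab : ∀ x, τ ≤ pma x ∧ pma x ≤ 1)
    (hqab : ∀ x, |qa x| ≤ C) (hqmab : ∀ x, |qma x| ≤ C)
    (hπ : ∀ h : β → ℝ, Measurable h → (∀ x, |h x| ≤ 1) →
      ∫ ω, I ω * h (X ω) ∂μ = ∫ ω, pa (X ω) * h (X ω) ∂μ)
    (hQ : ∀ h : β → ℝ, Measurable h → (∀ x, |h x| ≤ 1) →
      ∫ ω, Y ω * I ω * h (X ω) ∂μ = ∫ ω, pa (X ω) * qa (X ω) * h (X ω) ∂μ)
    (hcase : (∀ᵐ ω ∂μ, pma (X ω) = pa (X ω)) ∨ (∀ᵐ ω ∂μ, qma (X ω) = qa (X ω))) :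
    ∫ ω, D (X ω) * (Y ω * I ω / pma (X ω) - (I ω - pma (X ω)) / pma (X ω) * qma (X ω)) ∂μ
      = ∫ ω, D (X ω) * qa (X ω) ∂μ := by
  have hτinv : (0:ℝ) < τ⁻¹ := inv_pos.mpr hτ
  have hpm0 : ∀ x, 0 < pma x := fun x => lt_of_lt_of_le hτ (hpmab x).1
  have hpminv : ∀ x, |(pma x)⁻¹| ≤ τ⁻¹ := fun x => by
    rw [abs_of_pos (inv_pos.mpr (hpm0 x))]
    exact inv_anti₀ hτ (hpmab x).1
  have hIabs : ∀ ω, |I ω| ≤ 1 := fun ω => abs_le.mpr ⟨by linarith [(hIbd ω).1], (hIbd ω).2⟩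
  -- step 1: pointwise decomposition
  have step1 : ∀ ω, D (X ω) * (Y ω * I ω / pma (X ω) - (I ω - pma (X ω)) / pma (X ω) * qma (X ω))
      = Y ω * I ω * (D (X ω) * (pma (X ω))⁻¹)
        - I ω * (D (X ω) * qma (X ω) * (pma (X ω))⁻¹)
        + D (X ω) * qma (X ω) := by
    intro ω
    have h0 : pma (X ω) ≠ 0 := (hpm0 _).ne'
    field_simp
    ring
  rw [integral_congr_ae (Filter.Eventually.of_forall step1)]
  -- integrability
  have mh1 : Measurable (fun x => D x * (pma x)⁻¹) := hD.mul hpma.inv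
  have mh2 : Measurable (fun x => D x * qma x * (pma x)⁻¹) := (hD.mul hqma).mul hpma.inv
  have bh1 : ∀ x, |D x * (pma x)⁻¹| ≤ 1 * τ⁻¹ := fun x => abs_mul_le' (hDbd x) (hpminv x)
  have bh2 : ∀ x, |D x * qma x * (pma x)⁻¹| ≤ 1 * C * τ⁻¹ := fun x =>
    abs_mul_le' (abs_mul_le' (hDbd x) (hqmab x)) (hpminv x)
  have iu : Integrable (fun ω => Y ω * I ω * (D (X ω) * (pma (X ω))⁻¹)) μ :=
    integrable_of_bdd ((hYmeas.mul hImeas).mul (mh1.comp hX))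
      (B := C * 1 * (1 * τ⁻¹)) (fun ω => abs_mul_le' (abs_mul_le' (hYbd ω) (hIabs ω)) (bh1 (X ω)))
  have iv : Integrable (fun ω => I ω * (D (X ω) * qma (X ω) * (pma (X ω))⁻¹)) μ :=
    integrable_of_bdd (hImeas.mul (mh2.comp hX))
      (B := 1 * (1 * C * τ⁻¹)) (fun ω => abs_mul_le' (hIabs ω) (bh2 (X ω)))
  have iw : Integrable (fun ω => D (X ω) * qma (X ω)) μ :=
    integrable_of_bdd (((hD.mul hqma).comp hX))
      (B := 1 * C) (fun ω => abs_mul_le' (hDbd (X ω)) (hqmab (X ω)))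
  have iuv : Integrable (fun ω => Y ω * I ω * (D (X ω) * (pma (X ω))⁻¹)
      - I ω * (D (X ω) * qma (X ω) * (pma (X ω))⁻¹)) μ := iu.sub iv
  rw [integral_add iuv iw, integral_sub iu iv]
  -- step 3: apply the conditional-moment identities
  have e_u : ∫ ω, Y ω * I ω * (D (X ω) * (pma (X ω))⁻¹) ∂μ
      = ∫ ω, pa (X ω) * qa (X ω) * (D (X ω) * (pma (X ω))⁻¹) ∂μ :=
    extend_test _ _ X hQ (fun x => D x * (pma x)⁻¹) mh1 (by positivity) bh1
  have e_v : ∫ ω, I ω * (D (X ω) * qma (X ω) * (pma (X ω))⁻¹) ∂μ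
      = ∫ ω, pa (X ω) * (D (X ω) * qma (X ω) * (pma (X ω))⁻¹) ∂μ :=
    extend_test _ _ X hπ (fun x => D x * qma x * (pma x)⁻¹) mh2
      (B := (1 * C + 1) * τ⁻¹) (by positivity)
      (fun x => le_trans (bh2 x) (by nlinarith [hτinv]))
  rw [e_u, e_v]
  -- step 4: recombine into a single integral
  have hpaabs : ∀ x, |pa x| ≤ 1 := fun x =>
    abs_le.mpr ⟨by linarith [(hpab x).1], (hpab x).2⟩
  have iu' : Integrable (fun ω => pa (X ω) * qa (X ω) * (D (X ω) * (pma (X ω))⁻¹)) μ :=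
    integrable_of_bdd (((hpa.mul hqa).comp hX).mul (mh1.comp hX))
      (B := 1 * C * (1 * τ⁻¹))
      (fun ω => abs_mul_le' (abs_mul_le' (hpaabs (X ω)) (hqab (X ω))) (bh1 (X ω)))
  have iv' : Integrable (fun ω => pa (X ω) * (D (X ω) * qma (X ω) * (pma (X ω))⁻¹)) μ :=
    integrable_of_bdd ((hpa.comp hX).mul (mh2.comp hX))
      (B := 1 * (1 * C * τ⁻¹)) (fun ω => abs_mul_le' (hpaabs (X ω)) (bh2 (X ω)))
  have iuv' : Integrable (fun ω => pa (X ω) * qa (X ω) * (D (X ω) * (pma (X ω))⁻¹)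
      - pa (X ω) * (D (X ω) * qma (X ω) * (pma (X ω))⁻¹)) μ := iu'.sub iv'
  rw [← integral_sub iu' iv', ← integral_add iuv' iw]
  -- step 5: a.e. identification with D * qa
  apply integral_congr_ae
  rcases hcase with hc | hc
  · filter_upwards [hc] with ω e
    have h0 : pa (X ω) ≠ 0 := (hpab _).1.ne'
    rw [e]
    field_simp
    ring
  · filter_upwards [hc] with ω e
    rw [e]
    ring


/-- If either the working propensity `π^m` equals the true propensity `π`
almost everywhere, or the working outcome regression `Q^m` equals the true `Q` almost
everywhere, then the population AIPW value
`V^{AIPWE,m}(d) = E[ Y·1{A=d(X)}/π^m(A;X) − (1{A=d(X)} − π^m(d(X);X))/π^m(d(X);X)·Q^m(X,d(X)) ]`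
equals the true value `V(d) = E[Q(X, d(X))]`. -/
theorem AIPW_double_robust
    {Ω : Type*} [MeasurableSpace Ω]
    (μ : Measure Ω) [IsProbabilityMeasure μ] {p : ℕ}
    (X : Ω → (Fin p → ℝ)) (A Y : Ω → ℝ)
    (π πm : ℝ → (Fin p → ℝ) → ℝ) (Q Qm : (Fin p → ℝ) → ℝ → ℝ) (τ C : ℝ)
    (hX : Measurable X) (hA : Measurable A) (hY : Measurable Y)
    (hAval : ∀ ω, A ω = 1 ∨ A ω = -1)
    (hYbd : ∀ ω, |Y ω| ≤ C)
    (hτ : 0 < τ)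
    -- true propensity: bounded away from 0 and 1, and P(A = a | X = x) = π(a;x)
    (hπpos : ∀ a x, (a = 1 ∨ a = -1) → τ < π a x ∧ π a x < 1 - τ)
    (hπmeas : ∀ a, Measurable (π a))
    (hπ : ∀ a, (a = 1 ∨ a = -1) → ∀ h : (Fin p → ℝ) → ℝ, Measurable h → (∀ x, |h x| ≤ 1) →
      ∫ ω, (if A ω = a then (1:ℝ) else 0) * h (X ω) ∂μ = ∫ ω, π a (X ω) * h (X ω) ∂μ)
    -- true outcome regression: Q(x,a) = E[Y | X = x, A = a]
    (hQmeas : ∀ a, Measurable (fun x => Q x a))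
    (hQbd : ∀ x a, |Q x a| ≤ C)
    (hQ : ∀ a, (a = 1 ∨ a = -1) → ∀ h : (Fin p → ℝ) → ℝ, Measurable h → (∀ x, |h x| ≤ 1) →
      ∫ ω, Y ω * (if A ω = a then (1:ℝ) else 0) * h (X ω) ∂μ
        = ∫ ω, π a (X ω) * Q (X ω) a * h (X ω) ∂μ)
    -- working models: bounded, measurable, π^m bounded away from 0 and 1
    (hπm : ∀ a x, (a = 1 ∨ a = -1) → τ < πm a x ∧ πm a x < 1 - τ)
    (hπmmeas : ∀ a, Measurable (πm a))
    (hQmmeas : ∀ a, Measurable (fun x => Qm x a))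
    (hQmbd : ∀ x a, |Qm x a| ≤ C)
    -- either model is correctly specified (almost everywhere)
    (hcase : (∀ᵐ ω ∂μ, ∀ a, (a = 1 ∨ a = -1) → πm a (X ω) = π a (X ω))
           ∨ (∀ᵐ ω ∂μ, ∀ a, (a = 1 ∨ a = -1) → Qm (X ω) a = Q (X ω) a))
    -- the treatment rule
    (d : (Fin p → ℝ) → ℝ) (hd : Measurable d) (hdval : ∀ x, d x = 1 ∨ d x = -1) :
    ∫ ω, (Y ω * (if A ω = d (X ω) then (1:ℝ) else 0) / πm (A ω) (X ω)
          - ((if A ω = d (X ω) then (1:ℝ) else 0) - πm (d (X ω)) (X ω))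
              / πm (d (X ω)) (X ω) * Qm (X ω) (d (X ω))) ∂μ
      = ∫ ω, Q (X ω) (d (X ω)) ∂μ := by
  have hC : (0:ℝ) ≤ C := (abs_nonneg _).trans (hQbd (fun _ => 0) 0)
  have hτinv : (0:ℝ) < τ⁻¹ := inv_pos.mpr hτ
  -- per-arm key identity
  have key : ∀ a : ℝ, (a = 1 ∨ a = -1) →
      ∫ ω, (if d (X ω) = a then (1:ℝ) else 0)
        * (Y ω * (if A ω = a then (1:ℝ) else 0) / πm a (X ω)
           - ((if A ω = a then (1:ℝ) else 0) - πm a (X ω)) / πm a (X ω) * Qm (X ω) a) ∂μ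
      = ∫ ω, (if d (X ω) = a then (1:ℝ) else 0) * Q (X ω) a ∂μ := by
    intro a hah
    refine arm_value μ X hX (fun ω => if A ω = a then (1:ℝ) else 0)
      (Measurable.ite (hA (measurableSet_singleton a)) measurable_const measurable_const)
      (fun ω => by split_ifs <;> norm_num)
      Y hY hC hYbd (π a) (πm a) (fun x => Q x a) (fun x => Qm x a)
      (fun x => if d x = a then (1:ℝ) else 0)
      (hπmeas a) (hπmmeas a) (hQmeas a) (hQmmeas a)
      (Measurable.ite (hd (measurableSet_singleton a)) measurable_const measurable_const)
      (fun x => by split_ifs <;> norm_num)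
      hτ
      (fun x => ⟨hτ.trans (hπpos a x hah).1, by linarith [(hπpos a x hah).2]⟩)
      (fun x => ⟨(hπm a x hah).1.le, by linarith [(hπm a x hah).2]⟩)
      (fun x => hQbd x a) (fun x => hQmbd x a)
      (hπ a hah) (hQ a hah) ?_
    rcases hcase with hc | hc
    · exact Or.inl (hc.mono fun ω hω => hω a hah)
    · exact Or.inr (hc.mono fun ω hω => hω a hah)
  -- pointwise decomposition of the AIPW integrand over the two arms
  have step1 : ∀ ω, (Y ω * (if A ω = d (X ω) then (1:ℝ) else 0) / πm (A ω) (X ω)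
          - ((if A ω = d (X ω) then (1:ℝ) else 0) - πm (d (X ω)) (X ω))
              / πm (d (X ω)) (X ω) * Qm (X ω) (d (X ω)))
      = (if d (X ω) = 1 then (1:ℝ) else 0)
          * (Y ω * (if A ω = 1 then (1:ℝ) else 0) / πm 1 (X ω)
             - ((if A ω = 1 then (1:ℝ) else 0) - πm 1 (X ω)) / πm 1 (X ω) * Qm (X ω) 1)
        + (if d (X ω) = -1 then (1:ℝ) else 0)
          * (Y ω * (if A ω = -1 then (1:ℝ) else 0) / πm (-1) (X ω)
             - ((if A ω = -1 then (1:ℝ) else 0) - πm (-1) (X ω)) / πm (-1) (X ω)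
                 * Qm (X ω) (-1)) := by
    intro ω
    rcases hdval (X ω) with h | h <;> rcases hAval ω with hA' | hA' <;>
      rw [h, hA'] <;> norm_num
  rw [integral_congr_ae (Filter.Eventually.of_forall step1)]
  -- integrability of each arm's integrand
  have gmeas : ∀ a : ℝ, Measurable (fun ω => (if d (X ω) = a then (1:ℝ) else 0)
      * (Y ω * (if A ω = a then (1:ℝ) else 0) / πm a (X ω)
         - ((if A ω = a then (1:ℝ) else 0) - πm a (X ω)) / πm a (X ω) * Qm (X ω) a)) := by
    intro a
    have hI : Measurable (fun ω => if A ω = a then (1:ℝ) else 0) :=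
      Measurable.ite (hA (measurableSet_singleton a)) measurable_const measurable_const
    have hD : Measurable (fun ω => if d (X ω) = a then (1:ℝ) else 0) :=
      Measurable.ite ((hd.comp hX) (measurableSet_singleton a)) measurable_const
        measurable_const
    exact hD.mul (((hY.mul hI).div ((hπmmeas a).comp hX)).sub
      (((hI.sub ((hπmmeas a).comp hX)).div ((hπmmeas a).comp hX)).mul ((hQmmeas a).comp hX)))
  have gbd : ∀ a : ℝ, (a = 1 ∨ a = -1) →
      ∀ ω, |(if d (X ω) = a then (1:ℝ) else 0)
      * (Y ω * (if A ω = a then (1:ℝ) else 0) / πm a (X ω)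
         - ((if A ω = a then (1:ℝ) else 0) - πm a (X ω)) / πm a (X ω) * Qm (X ω) a)|
        ≤ 1 * (C * 1 * τ⁻¹ + 1 * τ⁻¹ * C) := by
    intro a hah ω
    have hb := hπm a (X ω) hah
    have h0 : 0 < πm a (X ω) := hτ.trans hb.1
    have hpinv : |(πm a (X ω))⁻¹| ≤ τ⁻¹ := by
      rw [abs_of_pos (inv_pos.mpr h0)]
      exact inv_anti₀ hτ hb.1.le
    have hIabs : |(if A ω = a then (1:ℝ) else 0)| ≤ 1 := by split_ifs <;> norm_num
    have hImabs : |(if A ω = a then (1:ℝ) else 0) - πm a (X ω)| ≤ 1 := by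
      split_ifs <;> (rw [abs_le]; constructor <;> linarith)
    have hDabs : |(if d (X ω) = a then (1:ℝ) else 0)| ≤ 1 := by split_ifs <;> norm_num
    refine abs_mul_le' hDabs ?_
    rw [div_eq_mul_inv, div_eq_mul_inv]
    calc |Y ω * (if A ω = a then (1:ℝ) else 0) * (πm a (X ω))⁻¹
          - ((if A ω = a then (1:ℝ) else 0) - πm a (X ω)) * (πm a (X ω))⁻¹ * Qm (X ω) a|
        ≤ |Y ω * (if A ω = a then (1:ℝ) else 0) * (πm a (X ω))⁻¹|
          + |((if A ω = a then (1:ℝ) else 0) - πm a (X ω)) * (πm a (X ω))⁻¹ * Qm (X ω) a| :=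
          abs_sub _ _
      _ ≤ C * 1 * τ⁻¹ + 1 * τ⁻¹ * C := by
          gcongr
          · exact abs_mul_le' (abs_mul_le' (hYbd ω) hIabs) hpinv
          · exact abs_mul_le' (abs_mul_le' hImabs hpinv) (hQmbd (X ω) a)
  have ig1 := integrable_of_bdd (μ := μ) (gmeas 1) (gbd 1 (Or.inl rfl))
  have ig2 := integrable_of_bdd (μ := μ) (gmeas (-1)) (gbd (-1) (Or.inr rfl))
  rw [integral_add ig1 ig2, key 1 (Or.inl rfl), key (-1) (Or.inr rfl)]
  -- recombine
  have iq : ∀ a : ℝ, Integrable (fun ω => (if d (X ω) = a then (1:ℝ) else 0) * Q (X ω) a) μ := by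
    intro a
    refine integrable_of_bdd (Measurable.mul ?_ ((hQmeas a).comp hX)) (B := 1 * C)
      (fun ω => abs_mul_le' (by split_ifs <;> norm_num) (hQbd (X ω) a))
    exact Measurable.ite ((hd.comp hX) (measurableSet_singleton a)) measurable_const
      measurable_const
  rw [← integral_add (iq 1) (iq (-1))]
  apply integral_congr_ae
  filter_upwards with ω
  rcases hdval (X ω) with h | h <;> rw [h] <;> norm_num
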